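/- Let ℐ be a usual Cantor scheme with J_∅ = [0,1] and let G be a topological group with a topological embedding j : [0,1] → G. For every n ∈ ℕ, the map z_n : [0,1] → G defined by z_n(0) = e and z_n(ξ) = π₋(∂ℐ_{n,ξ}) for ξ ∈ (0,1] is continuous; in particular, z_n(ξ) → e as ξ → 0⁺. -/

import Mathlib

open Set Topology Filter

/-- A usual Cantor scheme, given by the endpoint functions of the intervals
`J_s = [a s, b s]`, indexed by finite binary sequences (lists of booleans),
where `s ++ [false]` is `s⌢0` and `s ++ [true]` is `s⌢1`. -/
structure CantorScheme where
  a : List Bool → ℝ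
  b : List Bool → ℝ
  left_min : ∀ s, a (s ++ [false]) = a s
  right_max : ∀ s, b (s ++ [true]) = b s
  lt1 : ∀ s, a (s ++ [false]) < b (s ++ [false])
  lt2 : ∀ s, b (s ++ [false]) < a (s ++ [true])
  lt3 : ∀ s, a (s ++ [true]) < b (s ++ [true])
  diam_tendsto : ∀ f : ℕ → Bool,
    Filter.Tendsto (fun n => b (List.ofFn fun i : Fin n => f i) - a (List.ofFn fun i : Fin n => f i))
      Filter.atTop (nhds 0)

/-- For `ξ ∈ (0,1]`, the unique `k` with `3^{-(k+1)} < ξ ≤ 3^{-k}`. -/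
noncomputable def scaleIndex (ξ : ℝ) : ℕ := ⌊-Real.logb 3 ξ⌋₊

/-- The piecewise linear map `left_s : [0,1] → J_s` with `left_s 0 = min J_s`,
`left_s (1/3^k) = max J_{s⌢0^{k+1}}`, linear on each `[1/3^{k+1}, 1/3^k]`. -/
noncomputable def CantorScheme.leftMap (C : CantorScheme) (s : List Bool) (ξ : ℝ) : ℝ :=
  if ξ ≤ 0 then C.a s
  else
    let k := scaleIndex ξ
    let x0 : ℝ := (3:ℝ)⁻¹ ^ (k + 1)
    let x1 : ℝ := (3:ℝ)⁻¹ ^ k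
    let y0 := C.b (s ++ List.replicate (k + 2) false)
    let y1 := C.b (s ++ List.replicate (k + 1) false)
    y0 + (ξ - x0) / (x1 - x0) * (y1 - y0)

/-- The piecewise linear map `right_s : [0,1] → J_s` with `right_s 0 = max J_s`,
`right_s (1/3^k) = min J_{s⌢1^{k+1}}`, linear on each `[1/3^{k+1}, 1/3^k]`. -/
noncomputable def CantorScheme.rightMap (C : CantorScheme) (s : List Bool) (ξ : ℝ) : ℝ :=
  if ξ ≤ 0 then C.b s
  else
    let k := scaleIndex ξ
    let x0 : ℝ := (3:ℝ)⁻¹ ^ (k + 1)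
    let x1 : ℝ := (3:ℝ)⁻¹ ^ k
    let y0 := C.a (s ++ List.replicate (k + 2) true)
    let y1 := C.a (s ++ List.replicate (k + 1) true)
    y0 + (ξ - x0) / (x1 - x0) * (y1 - y0)

/-- The set `∂ℐ_{n,ξ}` of endpoints of the intervals
`left_s([0,ξ]) = [min J_s, left_s ξ]` and `right_s([0,ξ]) = [right_s ξ, max J_s]`,
for `s` ranging over binary sequences of length `n`. -/
noncomputable def CantorScheme.boundary (C : CantorScheme) (n : ℕ) (ξ : ℝ) : Finset ℝ :=
  Finset.image
    (fun p : (Fin n → Bool) × Fin 4 =>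
      ![C.a (List.ofFn p.1), C.leftMap (List.ofFn p.1) ξ,
        C.rightMap (List.ofFn p.1) ξ, C.b (List.ofFn p.1)] p.2)
    Finset.univ

/-- Alternating product `j x₁^{±1} j x₂^{∓1} ⋯` along a list, starting with the sign
given by the boolean (`false` = inverse first). -/
def altProd {G : Type*} [Group G] (j : ℝ → G) : Bool → List ℝ → G
  | _, [] => 1
  | sgn, x :: l => (if sgn then j x else (j x)⁻¹) * altProd j (!sgn) l

/-- `π₋(X) = j x₁⁻¹ · j x₂ · j x₃⁻¹ ⋯` where `x₁ < x₂ < ⋯` enumerates the finite set `X`. -/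
noncomputable def piMinus {G : Type*} [Group G] (j : ℝ → G) (X : Finset ℝ) : G :=
  altProd j false (X.sort (· ≤ ·))

/-- The map `z_n : [0,1] → G`, `z_n 0 = e`, `z_n ξ = π₋(∂ℐ_{n,ξ})` for `ξ > 0`. -/
noncomputable def CantorScheme.z {G : Type*} [Group G] (C : CantorScheme) (j : ℝ → G)
    (n : ℕ) (ξ : ℝ) : G :=
  if ξ ≤ 0 then 1 else piMinus j (C.boundary n ξ)

/-- `j` is a functorial embedding of `[0,1]` into the topological group `G`:
a topological embedding of `[0,1]` such that every autohomeomorphism `h` of `[0,1]`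
extends to a continuous group homomorphism `H : G → G` with `H ∘ j = j ∘ h`. -/
def FunctorialEmbedding {G : Type*} [Group G] [TopologicalSpace G] (j : ℝ → G) : Prop :=
  Topology.IsEmbedding ((Set.Icc (0:ℝ) 1).restrict j) ∧
  ∀ h : Set.Icc (0:ℝ) 1 ≃ₜ Set.Icc (0:ℝ) 1,
    ∃ H : G →* G, Continuous H ∧ ∀ x : Set.Icc (0:ℝ) 1, H (j x) = j (h x)


lemma rpow_neg_natCast_eq (k : ℕ) : (3:ℝ) ^ (-(k:ℝ)) = (3:ℝ)⁻¹ ^ k := by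
  rw [Real.rpow_neg (by norm_num), Real.rpow_natCast, inv_pow]

lemma scaleIndex_spec {ξ : ℝ} (h0 : 0 < ξ) (h1 : ξ ≤ 1) :
    (3:ℝ)⁻¹ ^ (scaleIndex ξ + 1) < ξ ∧ ξ ≤ (3:ℝ)⁻¹ ^ (scaleIndex ξ) := by
  have hb : (1:ℝ) < 3 := by norm_num
  have hlog : 0 ≤ -Real.logb 3 ξ := by
    have := Real.logb_nonpos hb h0.le h1
    linarith
  constructor
  · have h := Nat.lt_floor_add_one (-Real.logb 3 ξ)
    have h2 : -((scaleIndex ξ : ℝ) + 1) < Real.logb 3 ξ := by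
      simp only [scaleIndex] at *; linarith
    have := (Real.lt_logb_iff_rpow_lt hb h0).mp h2
    calc (3:ℝ)⁻¹ ^ (scaleIndex ξ + 1) = (3:ℝ) ^ (-((scaleIndex ξ : ℝ) + 1)) := by
          rw [← rpow_neg_natCast_eq]; push_cast; ring_nf
      _ < ξ := this
  · have h := Nat.floor_le hlog
    have h2 : Real.logb 3 ξ ≤ -(scaleIndex ξ : ℝ) := by
      simp only [scaleIndex] at *; linarith
    have := (Real.logb_le_iff_le_rpow hb h0).mp h2
    calc ξ ≤ (3:ℝ) ^ (-(scaleIndex ξ : ℝ)) := this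
      _ = (3:ℝ)⁻¹ ^ (scaleIndex ξ) := rpow_neg_natCast_eq _

lemma scaleIndex_eq {ξ : ℝ} (k : ℕ) (hl : (3:ℝ)⁻¹ ^ (k + 1) < ξ) (hu : ξ ≤ (3:ℝ)⁻¹ ^ k) :
    scaleIndex ξ = k := by
  have hb : (1:ℝ) < 3 := by norm_num
  have h0 : 0 < ξ := lt_trans (by positivity) hl
  have hk1 : Real.logb 3 ξ ≤ -(k:ℝ) := by
    have := (Real.logb_le_iff_le_rpow hb h0).mpr (by rw [rpow_neg_natCast_eq]; exact hu)
    linarith [this]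
  have hk2 : -((k:ℝ) + 1) < Real.logb 3 ξ := by
    have he : (3:ℝ) ^ (-((k:ℝ) + 1)) = (3:ℝ)⁻¹ ^ (k + 1) := by
      rw [← rpow_neg_natCast_eq]; push_cast; ring_nf
    apply (Real.lt_logb_iff_rpow_lt hb h0).mpr
    rw [he]; exact hl
  rw [scaleIndex, Nat.floor_eq_iff (by linarith)]
  constructor <;> [linarith; linarith]

lemma scaleIndex_ge {ξ : ℝ} (m : ℕ) (h0 : 0 < ξ) (h : ξ ≤ (3:ℝ)⁻¹ ^ m) :
    m ≤ scaleIndex ξ := by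
  have hb : (1:ℝ) < 3 := by norm_num
  apply Nat.le_floor
  have := (Real.logb_le_iff_le_rpow hb h0).mpr (by rw [rpow_neg_natCast_eq]; exact h)
  linarith

lemma tendsto_scaleIndex_atTop : Tendsto scaleIndex (𝓝[>] (0:ℝ)) atTop := by
  rw [tendsto_atTop]
  intro m
  have hmem : Iio ((3:ℝ)⁻¹ ^ m) ∈ 𝓝[>] (0:ℝ) :=
    nhdsWithin_le_nhds (Iio_mem_nhds (by positivity))
  filter_upwards [hmem, self_mem_nhdsWithin] with ξ h1 h2
  exact scaleIndex_ge m h2 h1.le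

/-- affine piece -/
noncomputable def pieceAff (g : ℕ → ℝ) (k : ℕ) (ξ : ℝ) : ℝ :=
  g (k + 1) + (ξ - (3:ℝ)⁻¹ ^ (k + 1)) / ((3:ℝ)⁻¹ ^ k - (3:ℝ)⁻¹ ^ (k + 1)) * (g k - g (k + 1))

noncomputable def pieceFun (g : ℕ → ℝ) (ξ : ℝ) : ℝ := pieceAff g (scaleIndex ξ) ξ

lemma x0_lt_x1 (k : ℕ) : (3:ℝ)⁻¹ ^ (k + 1) < (3:ℝ)⁻¹ ^ k := by
  apply pow_lt_pow_right_of_lt_one₀ (by norm_num) (by norm_num)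
  omega

lemma pieceAff_continuous (g : ℕ → ℝ) (k : ℕ) : Continuous (pieceAff g k) := by
  unfold pieceAff
  fun_prop

lemma pieceAff_x1 (g : ℕ → ℝ) (k : ℕ) : pieceAff g k ((3:ℝ)⁻¹ ^ k) = g k := by
  have h := x0_lt_x1 k
  rw [pieceAff, div_self (by linarith), one_mul]
  ring

lemma pieceAff_x0 (g : ℕ → ℝ) (k : ℕ) : pieceAff g k ((3:ℝ)⁻¹ ^ (k + 1)) = g (k + 1) := by
  simp [pieceAff]

lemma affine_mem {y0 y1 t : ℝ} (ht0 : 0 ≤ t) (ht1 : t ≤ 1) :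
    y0 + t * (y1 - y0) ∈ uIcc y0 y1 := by
  rcases le_total y0 y1 with h | h
  · rw [uIcc_of_le h]; constructor <;> nlinarith
  · rw [uIcc_of_ge h]; constructor <;> nlinarith

lemma pieceAff_mem {g : ℕ → ℝ} {k : ℕ} {ξ : ℝ}
    (hl : (3:ℝ)⁻¹ ^ (k + 1) ≤ ξ) (hu : ξ ≤ (3:ℝ)⁻¹ ^ k) :
    pieceAff g k ξ ∈ uIcc (g (k + 1)) (g k) := by
  have hd : (0:ℝ) < (3:ℝ)⁻¹ ^ k - (3:ℝ)⁻¹ ^ (k + 1) := by linarith [x0_lt_x1 k]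
  have ht0 : 0 ≤ (ξ - (3:ℝ)⁻¹ ^ (k + 1)) / ((3:ℝ)⁻¹ ^ k - (3:ℝ)⁻¹ ^ (k + 1)) :=
    div_nonneg (by linarith) hd.le
  have ht1 : (ξ - (3:ℝ)⁻¹ ^ (k + 1)) / ((3:ℝ)⁻¹ ^ k - (3:ℝ)⁻¹ ^ (k + 1)) ≤ 1 :=
    (div_le_one hd).mpr (by linarith)
  exact affine_mem ht0 ht1

lemma continuousOn_pieceFun (g : ℕ → ℝ) : ContinuousOn (pieceFun g) (Ioc (0:ℝ) 1) := by
  intro ξ₀ hξ₀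
  obtain ⟨hx0, hx1⟩ := scaleIndex_spec hξ₀.1 hξ₀.2
  set k := scaleIndex ξ₀ with hk
  clear_value k
  have hpiece : ∀ ξ, (3:ℝ)⁻¹ ^ (k + 1) < ξ → ξ ≤ (3:ℝ)⁻¹ ^ k → pieceFun g ξ = pieceAff g k ξ := by
    intro ξ h1 h2
    rw [pieceFun, scaleIndex_eq k h1 h2]
  rcases lt_or_eq_of_le hx1 with hlt | heq
  · -- interior point
    apply ContinuousAt.continuousWithinAt
    apply ((pieceAff_continuous g k).continuousAt).congr
    have hmem : Ioo ((3:ℝ)⁻¹ ^ (k + 1)) ((3:ℝ)⁻¹ ^ k) ∈ 𝓝 ξ₀ :=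
      Ioo_mem_nhds hx0 hlt
    filter_upwards [hmem] with ξ hξ
    exact (hpiece ξ hξ.1 hξ.2.le).symm
  · -- ξ₀ = 3⁻¹ ^ k : boundary point
    have hval : pieceFun g ξ₀ = g k := by
      rw [hpiece ξ₀ hx0 hx1, heq, pieceAff_x1]
    have hA : ContinuousWithinAt (pieceFun g) (Iic ξ₀) ξ₀ := by
      apply ((pieceAff_continuous g k).continuousAt).continuousWithinAt.congr_of_eventuallyEq
      · have hmem : Ioi ((3:ℝ)⁻¹ ^ (k + 1)) ∈ 𝓝[Iic ξ₀] ξ₀ :=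
          nhdsWithin_le_nhds (Ioi_mem_nhds hx0)
        filter_upwards [hmem, self_mem_nhdsWithin] with ξ h1 h2
        exact hpiece ξ h1 (h2.trans hx1)
      · rw [hpiece ξ₀ hx0 hx1]
    have hB : ContinuousWithinAt (pieceFun g) (Ioi ξ₀ ∩ Ioc 0 1) ξ₀ := by
      cases k with
      | zero =>
        have hempty : Ioi ξ₀ ∩ Ioc (0:ℝ) 1 = ∅ := by
          apply eq_empty_of_forall_notMem
          intro x hx
          norm_num at heq
          rw [heq] at hx
          exact absurd hx.2.2 (not_le.mpr hx.1)
        rw [ContinuousWithinAt, hempty, nhdsWithin_empty]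
        exact tendsto_bot
      | succ k' =>
        apply ((pieceAff_continuous g k').continuousAt).continuousWithinAt.congr_of_eventuallyEq
        · have hmem : Iio ((3:ℝ)⁻¹ ^ k') ∈ 𝓝[Ioi ξ₀ ∩ Ioc 0 1] ξ₀ := by
            apply nhdsWithin_le_nhds
            apply Iio_mem_nhds
            rw [heq]
            exact x0_lt_x1 k'
          filter_upwards [hmem, self_mem_nhdsWithin] with ξ h1 h2
          rw [pieceFun, scaleIndex_eq k' (by rw [← heq]; exact h2.1) h1.le]
        · rw [hval, heq, pieceAff_x0]
    have := hA.union hB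
    apply this.mono
    intro x hx
    rcases le_or_gt x ξ₀ with h | h
    · exact Or.inl h
    · exact Or.inr ⟨h, hx⟩

namespace CantorScheme
variable (C : CantorScheme)

lemma a_lt_b : ∀ s, C.a s < C.b s := by
  intro s
  induction s using List.reverseRecOn with
  | nil =>
    have h1 := C.lt1 []
    have h2 := C.lt2 []
    have h3 := C.lt3 []
    have h4 := C.left_min []
    have h5 := C.right_max []
    simp only [List.nil_append] at *
    linarith
  | append_singleton s x _ =>
    cases x
    · exact C.lt1 s
    · exact C.lt3 s

lemma a_le_concat (s : List Bool) (x : Bool) : C.a s ≤ C.a (s ++ [x]) := by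
  cases x
  · exact (C.left_min s).ge
  · have h1 := C.lt1 s
    have h2 := C.lt2 s
    have h3 := C.left_min s
    linarith

lemma concat_le_b (s : List Bool) (x : Bool) : C.b (s ++ [x]) ≤ C.b s := by
  cases x
  · have h2 := C.lt2 s
    have h3 := C.lt3 s
    have h4 := C.right_max s
    linarith
  · exact (C.right_max s).le

lemma a_le_append (s t : List Bool) : C.a s ≤ C.a (s ++ t) := by
  induction t using List.reverseRecOn with
  | nil => simp
  | append_singleton t x ih =>
    rw [← List.append_assoc]
    exact ih.trans (C.a_le_concat (s ++ t) x)

lemma append_le_b (s t : List Bool) : C.b (s ++ t) ≤ C.b s := by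
  induction t using List.reverseRecOn with
  | nil => simp
  | append_singleton t x ih =>
    rw [← List.append_assoc]
    exact (C.concat_le_b (s ++ t) x).trans ih

lemma a_append_replicate_false (s : List Bool) (m : ℕ) :
    C.a (s ++ List.replicate m false) = C.a s := by
  induction m with
  | zero => simp
  | succ m ih =>
    rw [List.replicate_succ', ← List.append_assoc, C.left_min, ih]

lemma b_append_replicate_true (s : List Bool) (m : ℕ) :
    C.b (s ++ List.replicate m true) = C.b s := by
  induction m with
  | zero => simp
  | succ m ih =>
    rw [List.replicate_succ', ← List.append_assoc, C.right_max, ih]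

lemma tendsto_diam (s : List Bool) (x : Bool) :
    Tendsto (fun m => C.b (s ++ List.replicate m x) - C.a (s ++ List.replicate m x))
      atTop (𝓝 0) := by
  set f : ℕ → Bool := fun i => if h : i < s.length then s[i] else x with hf
  have key : ∀ m, (List.ofFn fun i : Fin (s.length + m) => f i) = s ++ List.replicate m x := by
    intro m
    rw [List.ofFn_add]
    congr 1
    · have h : ∀ i : Fin s.length, f ((Fin.castAdd m i : Fin (s.length + m)) : ℕ) = s[(i : ℕ)] := by
        intro i
        simp only [hf, Fin.coe_castAdd]
        exact dif_pos i.isLt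
      exact (congrArg List.ofFn (funext h)).trans (List.ofFn_getElem (xs := s))
    · have h : ∀ i : Fin m, f ((Fin.natAdd s.length i : Fin (s.length + m)) : ℕ) = x := by
        intro i
        simp only [hf, Fin.coe_natAdd]
        exact dif_neg (by omega)
      simp only [h]
      exact List.ofFn_const m x
  have hT : Tendsto (fun m : ℕ => s.length + m) atTop atTop := by
    simpa [Nat.add_comm] using Filter.tendsto_add_atTop_nat s.length
  have hd := (C.diam_tendsto f).comp hT
  simpa only [Function.comp_def, key] using hd

lemma tendsto_b_replicate_false (s : List Bool) :
    Tendsto (fun m => C.b (s ++ List.replicate m false)) atTop (𝓝 (C.a s)) := by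
  have h := C.tendsto_diam s false
  simp only [C.a_append_replicate_false] at h
  have := h.add (tendsto_const_nhds (x := C.a s))
  simpa using this

lemma tendsto_a_replicate_true (s : List Bool) :
    Tendsto (fun m => C.a (s ++ List.replicate m true)) atTop (𝓝 (C.b s)) := by
  have h := C.tendsto_diam s true
  simp only [C.b_append_replicate_true] at h
  have h2 := (tendsto_const_nhds (x := C.b s)).sub h
  simpa using h2

end CantorScheme

namespace CantorScheme
variable (C : CantorScheme)

lemma leftMap_eq_pieceFun {ξ : ℝ} (hξ : 0 < ξ) (s : List Bool) :
    C.leftMap s ξ = pieceFun (fun m => C.b (s ++ List.replicate (m + 1) false)) ξ := by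
  rw [leftMap, if_neg (not_le.mpr hξ)]
  rfl

lemma rightMap_eq_pieceFun {ξ : ℝ} (hξ : 0 < ξ) (s : List Bool) :
    C.rightMap s ξ = pieceFun (fun m => C.a (s ++ List.replicate (m + 1) true)) ξ := by
  rw [rightMap, if_neg (not_le.mpr hξ)]
  rfl

lemma leftMap_mem {ξ : ℝ} (hξ : ξ ∈ Ioc (0:ℝ) 1) (s : List Bool) :
    C.leftMap s ξ ∈ Icc (C.b (s ++ List.replicate (scaleIndex ξ + 2) false))
      (C.b (s ++ List.replicate (scaleIndex ξ + 1) false)) := by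
  obtain ⟨hx0, hx1⟩ := scaleIndex_spec hξ.1 hξ.2
  rw [C.leftMap_eq_pieceFun hξ.1, pieceFun]
  have hle : C.b (s ++ List.replicate (scaleIndex ξ + 2) false) ≤
      C.b (s ++ List.replicate (scaleIndex ξ + 1) false) := by
    rw [List.replicate_succ' (n := scaleIndex ξ + 1), ← List.append_assoc]
    exact C.concat_le_b _ _
  have := pieceAff_mem (g := fun m => C.b (s ++ List.replicate (m + 1) false)) hx0.le hx1
  rwa [uIcc_of_le hle] at this

lemma rightMap_mem {ξ : ℝ} (hξ : ξ ∈ Ioc (0:ℝ) 1) (s : List Bool) :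
    C.rightMap s ξ ∈ Icc (C.a (s ++ List.replicate (scaleIndex ξ + 1) true))
      (C.a (s ++ List.replicate (scaleIndex ξ + 2) true)) := by
  obtain ⟨hx0, hx1⟩ := scaleIndex_spec hξ.1 hξ.2
  rw [C.rightMap_eq_pieceFun hξ.1, pieceFun]
  have hle : C.a (s ++ List.replicate (scaleIndex ξ + 1) true) ≤
      C.a (s ++ List.replicate (scaleIndex ξ + 2) true) := by
    rw [List.replicate_succ' (n := scaleIndex ξ + 1), ← List.append_assoc]
    exact C.a_le_concat _ _
  have := pieceAff_mem (g := fun m => C.a (s ++ List.replicate (m + 1) true)) hx0.le hx1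
  rwa [uIcc_of_ge hle] at this

lemma append_replicate_succ (s : List Bool) (x : Bool) (k : ℕ) :
    s ++ List.replicate (k + 1) x = (s ++ [x]) ++ List.replicate k x := by
  rw [List.replicate_succ, List.append_assoc]
  rfl

lemma a_lt_leftMap {ξ : ℝ} (hξ : ξ ∈ Ioc (0:ℝ) 1) (s : List Bool) :
    C.a s < C.leftMap s ξ := by
  have h := (C.leftMap_mem hξ s).1
  calc C.a s = C.a (s ++ List.replicate (scaleIndex ξ + 2) false) :=
        (C.a_append_replicate_false s _).symm
    _ < C.b (s ++ List.replicate (scaleIndex ξ + 2) false) := C.a_lt_b _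
    _ ≤ C.leftMap s ξ := h

lemma leftMap_le {ξ : ℝ} (hξ : ξ ∈ Ioc (0:ℝ) 1) (s : List Bool) :
    C.leftMap s ξ ≤ C.b (s ++ [false]) := by
  have h := (C.leftMap_mem hξ s).2
  calc C.leftMap s ξ ≤ C.b (s ++ List.replicate (scaleIndex ξ + 1) false) := h
    _ = C.b ((s ++ [false]) ++ List.replicate (scaleIndex ξ) false) := by
        rw [append_replicate_succ]
    _ ≤ C.b (s ++ [false]) := C.append_le_b _ _

lemma le_rightMap {ξ : ℝ} (hξ : ξ ∈ Ioc (0:ℝ) 1) (s : List Bool) :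
    C.a (s ++ [true]) ≤ C.rightMap s ξ := by
  have h := (C.rightMap_mem hξ s).1
  calc C.a (s ++ [true]) ≤ C.a ((s ++ [true]) ++ List.replicate (scaleIndex ξ) true) :=
        C.a_le_append _ _
    _ = C.a (s ++ List.replicate (scaleIndex ξ + 1) true) := by rw [append_replicate_succ]
    _ ≤ C.rightMap s ξ := h

lemma rightMap_lt_b {ξ : ℝ} (hξ : ξ ∈ Ioc (0:ℝ) 1) (s : List Bool) :
    C.rightMap s ξ < C.b s := by
  have h := (C.rightMap_mem hξ s).2
  calc C.rightMap s ξ ≤ C.a (s ++ List.replicate (scaleIndex ξ + 2) true) := h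
    _ < C.b (s ++ List.replicate (scaleIndex ξ + 2) true) := C.a_lt_b _
    _ = C.b s := C.b_append_replicate_true s _

lemma leftMap_lt_rightMap {ξ : ℝ} (hξ : ξ ∈ Ioc (0:ℝ) 1) (s : List Bool) :
    C.leftMap s ξ < C.rightMap s ξ :=
  lt_of_le_of_lt (C.leftMap_le hξ s)
    (lt_of_lt_of_le (C.lt2 s) (C.le_rightMap hξ s))

lemma continuousOn_leftMap (s : List Bool) : ContinuousOn (C.leftMap s) (Ioc (0:ℝ) 1) :=
  (continuousOn_pieceFun (fun m => C.b (s ++ List.replicate (m + 1) false))).congr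
    fun ξ hξ => C.leftMap_eq_pieceFun hξ.1 s

lemma continuousOn_rightMap (s : List Bool) : ContinuousOn (C.rightMap s) (Ioc (0:ℝ) 1) :=
  (continuousOn_pieceFun (fun m => C.a (s ++ List.replicate (m + 1) true))).congr
    fun ξ hξ => C.rightMap_eq_pieceFun hξ.1 s

lemma tendsto_leftMap (s : List Bool) :
    Tendsto (C.leftMap s) (𝓝[Ioc (0:ℝ) 1] 0) (𝓝 (C.a s)) := by
  have hsub : 𝓝[Ioc (0:ℝ) 1] (0:ℝ) ≤ 𝓝[Ioi (0:ℝ)] 0 := nhdsWithin_mono 0 Ioc_subset_Ioi_self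
  have hsc : Tendsto scaleIndex (𝓝[Ioc (0:ℝ) 1] (0:ℝ)) atTop :=
    tendsto_scaleIndex_atTop.mono_left hsub
  have hsc1 : Tendsto (fun ξ => scaleIndex ξ + 1) (𝓝[Ioc (0:ℝ) 1] (0:ℝ)) atTop :=
    tendsto_atTop_mono (fun ξ => Nat.le_succ _) hsc
  have hupper : Tendsto (fun ξ => C.b (s ++ List.replicate (scaleIndex ξ + 1) false))
      (𝓝[Ioc (0:ℝ) 1] (0:ℝ)) (𝓝 (C.a s)) :=
    (C.tendsto_b_replicate_false s).comp hsc1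
  apply tendsto_of_tendsto_of_tendsto_of_le_of_le' tendsto_const_nhds hupper
  · filter_upwards [self_mem_nhdsWithin] with ξ hξ
    exact (C.a_lt_leftMap hξ s).le
  · filter_upwards [self_mem_nhdsWithin] with ξ hξ
    exact (C.leftMap_mem hξ s).2

lemma tendsto_rightMap (s : List Bool) :
    Tendsto (C.rightMap s) (𝓝[Ioc (0:ℝ) 1] 0) (𝓝 (C.b s)) := by
  have hsub : 𝓝[Ioc (0:ℝ) 1] (0:ℝ) ≤ 𝓝[Ioi (0:ℝ)] 0 := nhdsWithin_mono 0 Ioc_subset_Ioi_self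
  have hsc : Tendsto scaleIndex (𝓝[Ioc (0:ℝ) 1] (0:ℝ)) atTop :=
    tendsto_scaleIndex_atTop.mono_left hsub
  have hsc1 : Tendsto (fun ξ => scaleIndex ξ + 1) (𝓝[Ioc (0:ℝ) 1] (0:ℝ)) atTop :=
    tendsto_atTop_mono (fun ξ => Nat.le_succ _) hsc
  have hlower : Tendsto (fun ξ => C.a (s ++ List.replicate (scaleIndex ξ + 1) true))
      (𝓝[Ioc (0:ℝ) 1] (0:ℝ)) (𝓝 (C.b s)) :=
    (C.tendsto_a_replicate_true s).comp hsc1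
  apply tendsto_of_tendsto_of_tendsto_of_le_of_le' hlower tendsto_const_nhds
  · filter_upwards [self_mem_nhdsWithin] with ξ hξ
    exact (C.rightMap_mem hξ s).1
  · filter_upwards [self_mem_nhdsWithin] with ξ hξ
    exact (C.rightMap_lt_b hξ s).le

end CantorScheme

/-- All binary sequences of length `n`, ordered so that the corresponding
intervals appear from left to right. -/
def binEnum : ℕ → List (List Bool)
  | 0 => [[]]
  | n + 1 => (binEnum n).flatMap (fun s => [s ++ [false], s ++ [true]])

lemma mem_binEnum_iff (n : ℕ) (s : List Bool) :
    s ∈ binEnum n ↔ ∃ f : Fin n → Bool, s = List.ofFn f := by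
  induction n generalizing s with
  | zero =>
    simp only [binEnum, List.mem_singleton]
    constructor
    · rintro rfl; exact ⟨![], by simp⟩
    · rintro ⟨f, rfl⟩; simp
  | succ n ih =>
    simp only [binEnum, List.mem_flatMap, List.mem_cons, List.mem_singleton,
      List.not_mem_nil, or_false]
    constructor
    · rintro ⟨t, ht, rfl | rfl⟩ <;>
        obtain ⟨f, rfl⟩ := (ih t).mp ht
      · refine ⟨Fin.snoc f false, ?_⟩
        rw [List.ofFn_succ']
        simp [Fin.snoc_castSucc, Fin.snoc_last, List.concat_eq_append]
      · refine ⟨Fin.snoc f true, ?_⟩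
        rw [List.ofFn_succ']
        simp [Fin.snoc_castSucc, Fin.snoc_last, List.concat_eq_append]
    · rintro ⟨f, rfl⟩
      refine ⟨List.ofFn (fun i => f i.castSucc), (ih _).mpr ⟨_, rfl⟩, ?_⟩
      rw [List.ofFn_succ', List.concat_eq_append]
      cases h : f (Fin.last n)
      · left; rw [← h]
      · right; rw [← h]

namespace CantorScheme
variable (C : CantorScheme)

lemma pairwise_binEnum (n : ℕ) :
    List.Pairwise (fun s t => C.b s < C.a t) (binEnum n) := by
  induction n with
  | zero => simp [binEnum]
  | succ n ih =>
    rw [binEnum, List.pairwise_flatMap]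
    constructor
    · intro s _
      simp only [List.pairwise_cons, List.mem_singleton, List.pairwise_singleton,
        List.not_mem_nil]
      exact ⟨by rintro t rfl; exact C.lt2 s, fun t ht => ht.elim, List.Pairwise.nil⟩
    · refine ih.imp ?_
      intro s t hst x hx y hy
      simp only [List.mem_cons, List.mem_singleton, List.not_mem_nil, or_false] at hx hy
      have hx' : C.b x ≤ C.b s := by rcases hx with rfl | rfl <;> exact C.concat_le_b s _
      have hy' : C.a t ≤ C.a y := by rcases hy with rfl | rfl <;> exact C.a_le_concat t _
      linarith

/-- The four boundary points of the two intervals associated with `s`. -/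
noncomputable def quad (ξ : ℝ) (s : List Bool) : List ℝ :=
  [C.a s, C.leftMap s ξ, C.rightMap s ξ, C.b s]

lemma sorted_flatMap_quad {ξ : ℝ} (hξ : ξ ∈ Ioc (0:ℝ) 1) (n : ℕ) :
    List.Pairwise (· < ·) ((binEnum n).flatMap (C.quad ξ)) := by
  rw [List.pairwise_flatMap]
  constructor
  · intro s _
    have h1 := C.a_lt_leftMap hξ s
    have h2 := C.leftMap_lt_rightMap hξ s
    have h3 := C.rightMap_lt_b hξ s
    rw [quad]
    refine List.pairwise_cons.mpr ⟨fun y hy => ?_, List.pairwise_cons.mpr ⟨fun y hy => ?_,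
      List.pairwise_cons.mpr ⟨fun y hy => ?_, List.pairwise_singleton _ _⟩⟩⟩ <;>
      (fin_cases hy <;> linarith)
  · refine (C.pairwise_binEnum n).imp ?_
    intro s t hst x hx y hy
    have h1 := C.a_lt_leftMap hξ s
    have h2 := C.leftMap_lt_rightMap hξ s
    have h3 := C.rightMap_lt_b hξ s
    have h4 := C.a_lt_leftMap hξ t
    have h5 := C.leftMap_lt_rightMap hξ t
    have h6 := C.rightMap_lt_b hξ t
    have ha := C.a_lt_b s
    have hb := C.a_lt_b t
    simp only [quad, List.mem_cons, List.mem_singleton, List.not_mem_nil, or_false] at hx hy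
    rcases hx with rfl | rfl | rfl | rfl <;> rcases hy with rfl | rfl | rfl | rfl <;> linarith

lemma boundary_eq_toFinset {ξ : ℝ} (n : ℕ) :
    C.boundary n ξ = ((binEnum n).flatMap (C.quad ξ)).toFinset := by
  ext x
  simp only [boundary, Finset.mem_image, Finset.mem_univ, true_and, List.mem_toFinset,
    List.mem_flatMap, mem_binEnum_iff, quad, List.mem_cons, List.mem_singleton,
    List.not_mem_nil, or_false]
  constructor
  · rintro ⟨⟨f, i⟩, rfl⟩
    refine ⟨List.ofFn f, ⟨f, rfl⟩, ?_⟩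
    fin_cases i <;> simp [Matrix.cons_val_zero, Matrix.cons_val_one]
  · rintro ⟨s, ⟨f, rfl⟩, rfl | rfl | rfl | rfl⟩
    · exact ⟨⟨f, 0⟩, by simp⟩
    · exact ⟨⟨f, 1⟩, by simp⟩
    · exact ⟨⟨f, 2⟩, by simp⟩
    · exact ⟨⟨f, 3⟩, by simp⟩

lemma sort_boundary {ξ : ℝ} (hξ : ξ ∈ Ioc (0:ℝ) 1) (n : ℕ) :
    (C.boundary n ξ).sort (· ≤ ·) = (binEnum n).flatMap (C.quad ξ) := by
  rw [C.boundary_eq_toFinset]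
  have hs := C.sorted_flatMap_quad hξ n
  have hnd : ((binEnum n).flatMap (C.quad ξ)).Nodup := hs.imp ne_of_lt
  exact (List.toFinset_sort (r := (· ≤ ·)) hnd).mpr (hs.imp le_of_lt)

end CantorScheme

-- PART5up --
section AltProdLemmas

variable {G : Type*} [Group G]

lemma altProd_quad (j : ℝ → G) (p q r t : ℝ) (l : List ℝ) (sgn : Bool) :
    altProd j sgn (p :: q :: r :: t :: l) =
      altProd j sgn [p, q, r, t] * altProd j sgn l := by
  simp [altProd, mul_assoc]

lemma altProd_quad_eval (j : ℝ → G) (p q r t : ℝ) :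
    altProd j false [p, q, r, t] = (j p)⁻¹ * (j q * ((j r)⁻¹ * j t)) := by
  simp [altProd]

lemma altProd_flatMap_quad (j : ℝ → G) (C : CantorScheme) (ξ : ℝ) :
    ∀ ls : List (List Bool),
      altProd j false (ls.flatMap (C.quad ξ)) =
        (ls.map fun s => altProd j false (C.quad ξ s)).prod
  | [] => by simp [altProd]
  | s :: ls => by
    have hq : C.quad ξ s ++ ls.flatMap (C.quad ξ) =
        C.a s :: C.leftMap s ξ :: C.rightMap s ξ :: C.b s :: ls.flatMap (C.quad ξ) := rfl
    rw [List.flatMap_cons, hq, altProd_quad, altProd_flatMap_quad j C ξ ls,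
      List.map_cons, List.prod_cons]
    rfl

lemma z_eq (j : ℝ → G) (C : CantorScheme) (n : ℕ) {ξ : ℝ} (hξ : ξ ∈ Ioc (0:ℝ) 1) :
    C.z j n ξ = ((binEnum n).map fun s =>
      (j (C.a s))⁻¹ * (j (C.leftMap s ξ) * ((j (C.rightMap s ξ))⁻¹ * j (C.b s)))).prod := by
  rw [CantorScheme.z, if_neg (not_le.mpr hξ.1), piMinus, C.sort_boundary hξ,
    altProd_flatMap_quad]
  exact congrArg List.prod (List.map_congr_left fun s _ => altProd_quad_eval j _ _ _ _)

variable [TopologicalSpace G] [IsTopologicalGroup G]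

lemma myContinuousOnListProd {ι : Type*} (l : List ι) {s : Set ℝ} (f : ι → ℝ → G)
    (h : ∀ i ∈ l, ContinuousOn (f i) s) :
    ContinuousOn (fun ξ => (l.map fun i => f i ξ).prod) s := by
  induction l with
  | nil => simpa using continuousOn_const
  | cons i l ih =>
    simp only [List.map_cons, List.prod_cons]
    exact (h i List.mem_cons_self).mul (ih fun i' hi => h i' (List.mem_cons_of_mem _ hi))

lemma myTendstoListProdOne {ι : Type*} (l : List ι) {φ : Filter ℝ} (f : ι → ℝ → G)
    (h : ∀ i ∈ l, Tendsto (f i) φ (𝓝 1)) :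
    Tendsto (fun ξ => (l.map fun i => f i ξ).prod) φ (𝓝 1) := by
  induction l with
  | nil => simpa using tendsto_const_nhds
  | cons i l ih =>
    simp only [List.map_cons, List.prod_cons]
    have := (h i List.mem_cons_self).mul (ih fun i' hi => h i' (List.mem_cons_of_mem _ hi))
    simpa using this

end AltProdLemmas



/-- If `j : [0,1] → G` is a topological embedding and `ℐ` is a usual Cantor scheme with
`J_∅ = [0,1]`, then each `z_n` is continuous on `[0,1]`; in particular
`z_n ξ → e` as `ξ → 0⁺`. -/
theorem stmt7 {G : Type*} [Group G] [TopologicalSpace G] [IsTopologicalGroup G]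
    (j : ℝ → G) (hj : Topology.IsEmbedding ((Set.Icc (0:ℝ) 1).restrict j))
    (C : CantorScheme) (h0 : C.a [] = 0) (h1 : C.b [] = 1) (n : ℕ) :
    ContinuousOn (C.z j n) (Set.Icc (0:ℝ) 1) ∧
    Filter.Tendsto (C.z j n) (nhdsWithin 0 (Set.Ioi 0)) (nhds (1 : G)) := by
  have hjc : ContinuousOn j (Icc (0:ℝ) 1) := continuousOn_iff_continuous_restrict.mpr hj.continuous
  have haRoot : ∀ s : List Bool, (0:ℝ) ≤ C.a s := by
    intro s
    have := C.a_le_append [] s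
    rw [List.nil_append, h0] at this
    exact this
  have hbRoot : ∀ s : List Bool, C.b s ≤ 1 := by
    intro s
    have := C.append_le_b [] s
    rw [List.nil_append, h1] at this
    exact this
  have haMem : ∀ s, C.a s ∈ Icc (0:ℝ) 1 := fun s => ⟨haRoot s, (C.a_lt_b s).le.trans (hbRoot s)⟩
  have hbMem : ∀ s, C.b s ∈ Icc (0:ℝ) 1 := fun s => ⟨(haRoot s).trans (C.a_lt_b s).le, hbRoot s⟩
  have hlMem : ∀ s, ∀ ξ ∈ Ioc (0:ℝ) 1, C.leftMap s ξ ∈ Icc (0:ℝ) 1 := by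
    intro s ξ hξ
    exact ⟨(haRoot s).trans (C.a_lt_leftMap hξ s).le,
      ((C.leftMap_le hξ s).trans (C.concat_le_b s false)).trans (hbRoot s)⟩
  have hrMem : ∀ s, ∀ ξ ∈ Ioc (0:ℝ) 1, C.rightMap s ξ ∈ Icc (0:ℝ) 1 := by
    intro s ξ hξ
    exact ⟨(haRoot (s ++ [true])).trans (C.le_rightMap hξ s),
      (C.rightMap_lt_b hξ s).le.trans (hbRoot s)⟩
  set F : List Bool → ℝ → G := fun s ξ =>
    (j (C.a s))⁻¹ * (j (C.leftMap s ξ) * ((j (C.rightMap s ξ))⁻¹ * j (C.b s))) with hF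
  have hzeq : ∀ ξ ∈ Ioc (0:ℝ) 1, C.z j n ξ = ((binEnum n).map fun s => F s ξ).prod :=
    fun ξ hξ => z_eq j C n hξ
  have hFcont : ∀ s ∈ binEnum n, ContinuousOn (F s) (Ioc (0:ℝ) 1) := by
    intro s _
    have hl : ContinuousOn (fun ξ => j (C.leftMap s ξ)) (Ioc (0:ℝ) 1) :=
      hjc.comp (C.continuousOn_leftMap s) (fun ξ hξ => hlMem s ξ hξ)
    have hr : ContinuousOn (fun ξ => j (C.rightMap s ξ)) (Ioc (0:ℝ) 1) :=
      hjc.comp (C.continuousOn_rightMap s) (fun ξ hξ => hrMem s ξ hξ)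
    exact continuousOn_const.mul (hl.mul (hr.inv.mul continuousOn_const))
  have hFtendsto : ∀ s ∈ binEnum n, Tendsto (F s) (𝓝[Ioc (0:ℝ) 1] 0) (𝓝 1) := by
    intro s _
    have hjl : Tendsto (fun ξ => j (C.leftMap s ξ)) (𝓝[Ioc (0:ℝ) 1] 0) (𝓝 (j (C.a s))) := by
      have h1 : Tendsto (C.leftMap s) (𝓝[Ioc (0:ℝ) 1] 0) (𝓝[Icc (0:ℝ) 1] (C.a s)) := by
        rw [tendsto_nhdsWithin_iff]
        refine ⟨C.tendsto_leftMap s, ?_⟩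
        filter_upwards [self_mem_nhdsWithin] with ξ hξ
        exact hlMem s ξ hξ
      exact Filter.Tendsto.comp (hjc (C.a s) (haMem s)) h1
    have hjr : Tendsto (fun ξ => j (C.rightMap s ξ)) (𝓝[Ioc (0:ℝ) 1] 0) (𝓝 (j (C.b s))) := by
      have h1 : Tendsto (C.rightMap s) (𝓝[Ioc (0:ℝ) 1] 0) (𝓝[Icc (0:ℝ) 1] (C.b s)) := by
        rw [tendsto_nhdsWithin_iff]
        refine ⟨C.tendsto_rightMap s, ?_⟩
        filter_upwards [self_mem_nhdsWithin] with ξ hξ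
        exact hrMem s ξ hξ
      exact Filter.Tendsto.comp (hjc (C.b s) (hbMem s)) h1
    have hlim : Tendsto (F s) (𝓝[Ioc (0:ℝ) 1] 0)
        (𝓝 ((j (C.a s))⁻¹ * (j (C.a s) * ((j (C.b s))⁻¹ * j (C.b s))))) :=
      tendsto_const_nhds.mul (hjl.mul ((hjr.inv).mul tendsto_const_nhds))
    simpa using hlim
  have hT : Tendsto (C.z j n) (𝓝[Ioc (0:ℝ) 1] 0) (𝓝 1) := by
    refine Filter.Tendsto.congr' ?_ (myTendstoListProdOne (binEnum n) F hFtendsto)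
    filter_upwards [self_mem_nhdsWithin] with ξ hξ
    exact (hzeq ξ hξ).symm
  constructor
  · intro ξ₀ hξ₀
    rcases eq_or_lt_of_le hξ₀.1 with heq | hpos
    · rw [← heq]
      have hz0 : C.z j n 0 = 1 := by rw [CantorScheme.z, if_pos le_rfl]
      rw [ContinuousWithinAt, hz0]
      have hsplit : 𝓝[Icc (0:ℝ) 1] (0:ℝ) ≤ 𝓝[{(0:ℝ)}] 0 ⊔ 𝓝[Ioc (0:ℝ) 1] 0 := by
        rw [← nhdsWithin_union]
        apply nhdsWithin_mono
        intro x hx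
        rcases eq_or_lt_of_le hx.1 with h | h
        · exact Or.inl h.symm
        · exact Or.inr ⟨h, hx.2⟩
      apply Tendsto.mono_left ?_ hsplit
      rw [tendsto_sup]
      constructor
      · rw [nhdsWithin_singleton]
        have := tendsto_pure_nhds (C.z j n) (0:ℝ)
        rwa [hz0] at this
      · exact hT
    · have hmem : Ioc (0:ℝ) 1 ∈ 𝓝[Icc (0:ℝ) 1] ξ₀ := by
        apply mem_nhdsWithin.mpr ⟨Ioi 0, isOpen_Ioi, hpos, ?_⟩
        intro x hx
        exact ⟨hx.1, hx.2.2⟩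
      have hcont : ContinuousWithinAt (C.z j n) (Ioc (0:ℝ) 1) ξ₀ :=
        ((myContinuousOnListProd (binEnum n) F hFcont).congr
          (fun ξ hξ => hzeq ξ hξ)) ξ₀ ⟨hpos, hξ₀.2⟩
      exact hcont.mono_of_mem_nhdsWithin hmem
  · have heqf : 𝓝[Ioi (0:ℝ)] (0:ℝ) = 𝓝[Ioc (0:ℝ) 1] 0 := by
      have hIic : Iic (1:ℝ) ∈ 𝓝[Ioi (0:ℝ)] (0:ℝ) :=
        nhdsWithin_le_nhds (Filter.mem_of_superset (Iio_mem_nhds one_pos) Iio_subset_Iic_self)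
      calc 𝓝[Ioi (0:ℝ)] (0:ℝ) = 𝓝[Ioi (0:ℝ) ∩ Iic 1] 0 := nhdsWithin_restrict'' _ hIic
        _ = 𝓝[Ioc (0:ℝ) 1] 0 := by rw [Set.Ioi_inter_Iic]
    rw [heqf]
    exact hT
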